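/- Let n ≥ 1, let q be a positive integer, and let s ∈ ℤⁿ with gcd(q, s₁, …, sₙ) = 1. Define Φ(k) = #{(a₁, …, aₙ) ∈ ℤⁿ : a₁s₁ + ⋯ + aₙsₙ ≡ 0 (mod q) and |a₁| + ⋯ + |aₙ| ≤ k} for integers k ≥ 0. Then Φ is a quasipolynomial of degree n whose period divides q: there exist polynomials p₀, p₁, …, p_{q−1} with rational coefficients, each of degree at most n, such that Φ(k) = p_{k mod q}(k) for every integer k ≥ 0. -/

import Mathlib

open Polynomial Finset


lemma desc_sum (e : ℕ) (T : ℕ) :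
    ∑ t ∈ range T, (descPochhammer ℚ e).eval (t : ℚ)
      = (descPochhammer ℚ (e+1)).eval (T : ℚ) / (e+1) := by
  induction T with
  | zero =>
    simp [descPochhammer_succ_left]
  | succ T ih =>
    rw [Finset.sum_range_succ, ih]
    have h1 : (descPochhammer ℚ (e+1)).eval ((T:ℚ)+1)
        = ((T:ℚ)+1) * (descPochhammer ℚ e).eval (T:ℚ) := by
      rw [descPochhammer_succ_left]
      simp [eval_comp]
    have h2 : (descPochhammer ℚ (e+1)).eval (T:ℚ)
        = (descPochhammer ℚ e).eval (T:ℚ) * ((T:ℚ) - e) := descPochhammer_succ_eval e _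
    have hc : ((T+1:ℕ):ℚ) = (T:ℚ)+1 := by push_cast; ring
    rw [hc, h1, h2]
    have he : ((e:ℚ)+1) ≠ 0 := by positivity
    field_simp
    ring

lemma exists_sum_poly_aux (E : ℕ) : ∀ p : Polynomial ℚ, p.natDegree ≤ E →
    ∃ P : Polynomial ℚ, P.natDegree ≤ p.natDegree + 1 ∧
      ∀ T : ℕ, ∑ t ∈ range T, p.eval (t : ℚ) = P.eval (T : ℚ) := by
  induction E with
  | zero =>
    intro p hp
    refine ⟨Polynomial.C (p.coeff 0) * Polynomial.X, ?_, ?_⟩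
    · exact le_trans (natDegree_C_mul_le _ _) (by simp)
    · intro T
      have : p = Polynomial.C (p.coeff 0) := Polynomial.eq_C_of_natDegree_le_zero hp
      rw [this]
      simp only [eval_C, eval_mul, eval_X, Finset.sum_const, Finset.card_range, nsmul_eq_mul, Polynomial.coeff_C_zero]
      ring
  | succ E ih =>
    intro p hp
    by_cases hp0 : p = 0
    · exact ⟨0, by simp, by simp [hp0]⟩
    set e := p.natDegree with he
    set c := p.leadingCoeff with hc
    set D : Polynomial ℚ := descPochhammer ℚ e with hD
    have hDm : D.Monic := monic_descPochhammer ℚ e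
    have hDd : D.natDegree = e := by simp [hD]
    set r : Polynomial ℚ := p - Polynomial.C c * D with hr
    have hrd : r = 0 ∨ r.natDegree < e ∨ e = 0 := by
      rcases Nat.eq_zero_or_pos e with h | h
      · exact Or.inr (Or.inr h)
      rcases eq_or_ne r 0 with h0 | h0
      · exact Or.inl h0
      · refine Or.inr (Or.inl ?_)
        have hlt : r.degree < p.degree := by
          apply degree_sub_lt
          · rw [degree_C_mul (by simpa [hc] using leadingCoeff_ne_zero.mpr hp0)]
            rw [degree_eq_natDegree hp0, degree_eq_natDegree hDm.ne_zero, hDd]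
          · exact hp0
          · simp [hc, hDm.leadingCoeff]
        have := natDegree_lt_natDegree h0 hlt
        omega
    have hre' : r.natDegree ≤ e := by
      rcases hrd with h | h | h
      · simp [h]
      · omega
      · have hD1 : D = 1 := by rw [hD, h]; rfl
        have h0 : p.natDegree = 0 := by rw [← he]; exact h
        have hpc : p = Polynomial.C c := by
          rw [hc, Polynomial.leadingCoeff, h0]
          exact Polynomial.eq_C_of_natDegree_le_zero h0.le
        have hr0 : r = 0 := by rw [hr, hpc, hD1]; ring
        simp [hr0]
    have hre : r.natDegree ≤ E := by
      rcases hrd with h | h | h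
      · simp [h]
      · omega
      · omega
    obtain ⟨Pr, hPr1, hPr2⟩ := ih r hre
    refine ⟨Polynomial.C (c / (e+1)) * descPochhammer ℚ (e+1) + Pr, ?_, ?_⟩
    · apply le_trans (natDegree_add_le _ _)
      simp only [max_le_iff]
      exact ⟨le_trans (natDegree_C_mul_le _ _) (by simp),
        le_trans hPr1 (Nat.succ_le_succ hre')⟩
    · intro T
      have hsplit : ∀ t : ℚ, p.eval t = c * D.eval t + r.eval t := by
        intro t; simp [hr]
      simp only [hsplit, Finset.sum_add_distrib]
      rw [← Finset.mul_sum, desc_sum, hPr2]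
      simp only [eval_add, eval_mul, eval_C]
      ring

lemma exists_sum_poly (p : Polynomial ℚ) :
    ∃ P : Polynomial ℚ, P.natDegree ≤ p.natDegree + 1 ∧
      ∀ T : ℕ, ∑ t ∈ range T, p.eval (t : ℚ) = P.eval (T : ℚ) :=
  exists_sum_poly_aux p.natDegree p le_rfl


variable (q : ℕ)

/-- counting function -/
noncomputable def cnt (n : ℕ) (s : Fin n → ℤ) (u : ℤ) (k : ℕ) : ℕ :=
  Set.ncard {a : Fin n → ℤ | (q : ℤ) ∣ (∑ i, a i * s i) - u ∧ (∑ i, (a i).natAbs) ≤ k}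

/-- Finset version -/
noncomputable def cntF (n : ℕ) (s : Fin n → ℤ) (u : ℤ) (k : ℕ) : Finset (Fin n → ℤ) :=
  (Fintype.piFinset fun _ => Finset.Icc (-(k:ℤ)) k).filter
    (fun a => (q : ℤ) ∣ (∑ i, a i * s i) - u ∧ (∑ i, (a i).natAbs) ≤ k)

lemma mem_cntF {n : ℕ} {s : Fin n → ℤ} {u : ℤ} {k : ℕ} {a : Fin n → ℤ} :
    a ∈ cntF q n s u k ↔ (q : ℤ) ∣ (∑ i, a i * s i) - u ∧ (∑ i, (a i).natAbs) ≤ k := by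
  simp only [cntF, Finset.mem_filter, Fintype.mem_piFinset, Finset.mem_Icc, and_iff_right_iff_imp]
  rintro ⟨-, h2⟩ i
  have h3 : (a i).natAbs ≤ k :=
    le_trans (Finset.single_le_sum (f := fun i => (a i).natAbs) (fun _ _ => Nat.zero_le _)
      (Finset.mem_univ i)) h2
  have h4 : |a i| ≤ (k : ℤ) := by
    rw [Int.abs_eq_natAbs]; exact_mod_cast h3
  exact abs_le.mp h4

lemma cnt_eq_card (n : ℕ) (s : Fin n → ℤ) (u : ℤ) (k : ℕ) :
    cnt q n s u k = (cntF q n s u k).card := by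
  rw [cnt, ← Set.ncard_coe_finset]
  congr 1
  ext a
  simp [mem_cntF]

/-- dependence only on residue of u -/
lemma cnt_congr (n : ℕ) (s : Fin n → ℤ) {u u' : ℤ} (h : (q:ℤ) ∣ u - u') (k : ℕ) :
    cnt q n s u k = cnt q n s u' k := by
  unfold cnt
  congr 2
  ext a
  have : ((q:ℤ) ∣ (∑ i, a i * s i) - u) ↔ ((q:ℤ) ∣ (∑ i, a i * s i) - u') := by
    constructor <;> intro hd
    · have := dvd_add hd h; simpa [sub_add_sub_cancel] using this
    · have := dvd_sub hd h; simpa [sub_sub_sub_cancel_right] using this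
  simp [this]

/-- the recursion -/
lemma cnt_succ (n : ℕ) (s : Fin (n+1) → ℤ) (u : ℤ) (k : ℕ) :
    cnt q (n+1) s u k = ∑ m ∈ Finset.Icc (-(k:ℤ)) k,
      cnt q n (s ∘ Fin.castSucc) (u - m * s (Fin.last n)) (k - m.natAbs) := by
  simp only [cnt_eq_card]
  rw [Finset.card_eq_sum_card_fiberwise
    (f := fun a => a (Fin.last n)) (t := Finset.Icc (-(k:ℤ)) k)]
  · apply Finset.sum_congr rfl
    intro m hm
    have hmk : m.natAbs ≤ k := by
      rw [Finset.mem_Icc] at hm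
      omega
    have key : ∀ a : Fin (n+1) → ℤ, (∑ i, a i * s i)
        = (∑ i, Fin.init a i * (s ∘ Fin.castSucc) i) + a (Fin.last n) * s (Fin.last n) := by
      intro a
      rw [Fin.sum_univ_castSucc (f := fun i => a i * s i)]
      rfl
    have key2 : ∀ a : Fin (n+1) → ℤ, (∑ i, (a i).natAbs)
        = (∑ i, (Fin.init a i).natAbs) + (a (Fin.last n)).natAbs := by
      intro a
      rw [Fin.sum_univ_castSucc (f := fun i => (a i).natAbs)]
      rfl
    apply Finset.card_bij (fun a _ => Fin.init a)
    · -- maps into target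
      intro a ha
      rw [Finset.mem_filter, mem_cntF] at ha
      obtain ⟨⟨hd, hsum⟩, ha1⟩ := ha
      rw [mem_cntF]
      constructor
      · have : (∑ i, Fin.init a i * (s ∘ Fin.castSucc) i) - (u - m * s (Fin.last n))
            = (∑ i, a i * s i) - u := by
          rw [key a, ha1]; ring
        rw [this]; exact hd
      · rw [key2 a, ha1] at hsum
        omega
    · -- injective
      intro a ha b hb hab
      rw [Finset.mem_filter] at ha hb
      funext i
      refine Fin.lastCases ?_ ?_ i
      · rw [ha.2, hb.2]
      · intro j
        exact congrFun hab j
    · -- surjective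
      intro b hb
      rw [mem_cntF] at hb
      refine ⟨Fin.snoc b m, ?_, ?_⟩
      · rw [Finset.mem_filter, mem_cntF]
        have h1 : Fin.init (Fin.snoc b m : Fin (n+1) → ℤ) = b := by funext j; simp [Fin.init]
        have h2 : (Fin.snoc b m : Fin (n+1) → ℤ) (Fin.last n) = m := by simp
        refine ⟨⟨?_, ?_⟩, h2⟩
        · have := hb.1
          rw [key (Fin.snoc b m), h1, h2]
          have e : (∑ i, b i * (s ∘ Fin.castSucc) i) + m * s (Fin.last n) - u
              = (∑ i, b i * (s ∘ Fin.castSucc) i) - (u - m * s (Fin.last n)) := by ring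
          rw [e]; exact this
        · rw [key2 (Fin.snoc b m), h1, h2]
          have := hb.2
          omega
      · funext j; simp [Fin.init]
  · intro a ha
    simp only [Finset.mem_coe] at ha ⊢
    rw [mem_cntF] at ha
    rw [Finset.mem_Icc]
    have h3 : (a (Fin.last n)).natAbs ≤ k :=
      le_trans (Finset.single_le_sum (f := fun i => (a i).natAbs) (fun _ _ => Nat.zero_le _)
        (Finset.mem_univ _)) ha.2
    omega


lemma sum_Icc_neg (k : ℕ) (f : ℤ → ℚ) :
    ∑ m ∈ Finset.Icc (-(k:ℤ)) k, f m
      = f 0 + ∑ j ∈ Finset.range k, (f (j+1) + f (-(j+1:ℤ))) := by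
  induction k with
  | zero => simp
  | succ k ih =>
    have h1 : Finset.Icc (-((k:ℤ)+1)) ((k:ℤ)+1)
        = insert (-((k:ℤ)+1)) (insert ((k:ℤ)+1) (Finset.Icc (-(k:ℤ)) k)) := by
      ext x
      simp only [Finset.mem_Icc, Finset.mem_insert]
      omega
    have h2 : ((k:ℤ)+1) ∉ Finset.Icc (-(k:ℤ)) (k:ℤ) := by simp
    have h3 : (-((k:ℤ)+1)) ∉ insert ((k:ℤ)+1) (Finset.Icc (-(k:ℤ)) (k:ℤ)) := by
      simp only [Finset.mem_insert, Finset.mem_Icc]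
      omega
    push_cast
    rw [h1, Finset.sum_insert h3, Finset.sum_insert h2, ih, Finset.sum_range_succ]
    push_cast
    ring

lemma div_helper1 (q : ℕ) (hq : 0 < q) (M : ℕ) : (M*q + q)/q = M+1 := by
  rw [Nat.add_div_right _ hq, Nat.mul_div_cancel _ hq]

lemma div_helper2 (q : ℕ) (hq : 0 < q) (M : ℕ) : (M*q + (q-1))/q = M := by
  rw [add_comm, Nat.add_mul_div_right _ _ hq, Nat.div_eq_of_lt (by omega)]
  omega

lemma sum_range_residues (q : ℕ) (hq : 0 < q) (F : ℕ → ℚ) (k : ℕ) :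
    ∑ j ∈ Finset.range k, F j
      = ∑ b ∈ Finset.range q, ∑ t ∈ Finset.range ((k + q - 1 - b)/q), F (b + t*q) := by
  induction k with
  | zero =>
    rw [Finset.sum_range_zero]
    symm
    apply Finset.sum_eq_zero
    intro b hb
    rw [Finset.mem_range] at hb
    rw [Nat.div_eq_of_lt (by omega)]
    simp
  | succ k ih =>
    have hdm : k / q * q + k % q = k := by rw [mul_comm]; exact Nat.div_add_mod k q
    have hmlt : k % q < q := Nat.mod_lt k hq
    rw [Finset.sum_range_succ, ih]
    have hN : ∀ b, b < q → (k + 1 + q - 1 - b)/q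
        = (k + q - 1 - b)/q + if b = k % q then 1 else 0 := by
      intro b hb
      rcases eq_or_ne b (k % q) with h | h
      · rw [h, if_pos rfl]
        have e1 : k + 1 + q - 1 - k % q = (k / q) * q + q := by omega
        have e2 : k + q - 1 - k % q = (k / q) * q + (q - 1) := by omega
        rw [e1, e2, div_helper1 q hq, div_helper2 q hq]
      · rw [if_neg h]
        have e1 : k + 1 + q - 1 - b = (k + q - 1 - b) + 1 := by omega
        have hnd : ¬ (q ∣ (k + q - 1 - b) + 1) := by
          intro hdvd
          have e2 : k + q - 1 - b + 1 = k + q - b := by omega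
          rw [e2] at hdvd
          apply h
          obtain ⟨c, hc⟩ := hdvd
          cases c with
          | zero => simp at hc; omega
          | succ c =>
            have h5 : q * (c+1) = c * q + q := by ring
            have hk2 : k = b + c * q := by omega
            rw [hk2, Nat.add_mul_mod_self_right, Nat.mod_eq_of_lt hb]
        rw [e1, Nat.succ_div, if_neg hnd, add_zero]
    calc ∑ b ∈ Finset.range q, ∑ t ∈ Finset.range ((k + q - 1 - b)/q), F (b + t*q) + F k
        = ∑ b ∈ Finset.range q, ((∑ t ∈ Finset.range ((k + q - 1 - b)/q), F (b + t*q))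
            + if b = k % q then F k else 0) := by
          rw [Finset.sum_add_distrib, Finset.sum_ite_eq' (Finset.range q) (k % q) (fun _ => F k)]
          rw [if_pos (Finset.mem_range.mpr (Nat.mod_lt k hq))]
      _ = ∑ b ∈ Finset.range q, ∑ t ∈ Finset.range ((k + 1 + q - 1 - b)/q), F (b + t*q) := by
          apply Finset.sum_congr rfl
          intro b hb
          rw [Finset.mem_range] at hb
          rw [hN b hb]
          rcases eq_or_ne b (k % q) with h | h
          · rw [h, if_pos rfl, if_pos rfl, Finset.sum_range_succ]
            congr 2
            have e2 : k + q - 1 - k % q = (k / q) * q + (q - 1) := by omega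
            rw [e2, div_helper2 q hq]
            omega
          · rw [if_neg h, if_neg h, add_zero, add_zero]

lemma residue_count (q : ℕ) (hq : 0 < q) (k b : ℕ) (hb : b < q) :
    (k + q - 1 - b)/q = k/q + if b < k % q then 1 else 0 := by
  have hdm : k / q * q + k % q = k := by rw [mul_comm]; exact Nat.div_add_mod k q
  have hmlt : k % q < q := Nat.mod_lt k hq
  have e1 : k + q - 1 - b = (k % q + q - 1 - b) + (k/q) * q := by omega
  rw [e1, Nat.add_mul_div_right _ _ hq]
  rcases lt_or_ge b (k % q) with h | h
  · rw [if_pos h]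
    have : (k % q + q - 1 - b) / q = 1 :=
      Nat.div_eq_of_lt_le (by omega) (by omega)
    omega
  · rw [if_neg (not_lt.mpr h)]
    have : (k % q + q - 1 - b) / q = 0 := Nat.div_eq_of_lt (by omega)
    omega
lemma cnt_zero (q : ℕ) (s : Fin 0 → ℤ) (u : ℤ) (k : ℕ) :
    cnt q 0 s u k = if (q:ℤ) ∣ u then 1 else 0 := by
  unfold cnt
  by_cases hd : (q:ℤ) ∣ u
  · rw [if_pos hd]
    have hset : {a : Fin 0 → ℤ | (q : ℤ) ∣ (∑ i, a i * s i) - u ∧ (∑ i, (a i).natAbs) ≤ k}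
        = Set.univ := by
      ext a
      simp only [Set.mem_setOf_eq, Set.mem_univ, iff_true]
      refine ⟨by simpa using (dvd_neg.mpr hd), by simp⟩
    rw [hset, Set.ncard_univ]
    exact Nat.card_unique
  · rw [if_neg hd]
    have hset : {a : Fin 0 → ℤ | (q : ℤ) ∣ (∑ i, a i * s i) - u ∧ (∑ i, (a i).natAbs) ≤ k}
        = ∅ := by
      ext a
      simp only [Set.mem_setOf_eq, Set.mem_empty_iff_false, iff_false, not_and]
      intro h
      exfalso
      apply hd
      have : (∑ i, a i * s i) = 0 := by simp
      rw [this, zero_sub, dvd_neg] at h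
      exact h
    rw [hset]
    simp

theorem key (q : ℕ) (hq : 0 < q) (n : ℕ) : ∀ (s : Fin n → ℤ) (u : ℤ),
    ∃ p : Fin q → Polynomial ℚ, (∀ i, (p i).natDegree ≤ n) ∧
      ∀ k : ℕ, (cnt q n s u k : ℚ) = (p ⟨k % q, Nat.mod_lt k hq⟩).eval (k : ℚ) := by
  induction n with
  | zero =>
    intro s u
    refine ⟨fun _ => Polynomial.C (if (q:ℤ) ∣ u then (1:ℚ) else 0), fun i => by split_ifs <;> simp, ?_⟩
    intro k
    rw [cnt_zero]
    by_cases hd : (q:ℤ) ∣ u <;> simp [hd]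
  | succ n ih =>
    intro s u
    set s' : Fin n → ℤ := s ∘ Fin.castSucc with hs'
    set sl : ℤ := s (Fin.last n) with hsl
    choose P hP1 hP2 using fun u' : ℤ => ih s' u'
    set R : Fin q → Fin q → Polynomial ℚ := fun a b =>
      (P (u - ((a:ℤ) - (b:ℤ)) * sl) b + P (u + ((a:ℤ) - (b:ℤ)) * sl) b).comp
        (Polynomial.C ((b:ℕ):ℚ) + Polynomial.C (q:ℚ) * Polynomial.X) with hR
    choose Q hQ1 hQ2 using fun (a b : Fin q) => exists_sum_poly (R a b)
    set A : Fin q → Fin q → Polynomial ℚ := fun a b =>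
      Polynomial.C ((if (b:ℕ) < (a:ℕ) then (1:ℚ) else 0) - ((a:ℕ):ℚ)/q)
        + Polynomial.C (1/(q:ℚ)) * Polynomial.X with hA
    refine ⟨fun a => P u a + ∑ b : Fin q, (Q a b).comp (A a b), ?_, ?_⟩
    · -- degrees
      intro a
      apply le_trans (natDegree_add_le _ _)
      rw [max_le_iff]
      constructor
      · exact le_trans (hP1 u a) (by omega)
      · apply Polynomial.natDegree_sum_le_of_forall_le
        intro b _
        apply le_trans (natDegree_comp_le)
        have hAdeg : (A a b).natDegree ≤ 1 := by
          apply le_trans (natDegree_add_le _ _)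
          rw [max_le_iff]
          refine ⟨?_, le_trans (natDegree_C_mul_le _ _) (by simp)⟩
          rw [natDegree_C]; omega
        have hRdeg : (R a b).natDegree ≤ n := by
          apply le_trans (natDegree_comp_le)
          have h1 : (P (u - ((a:ℤ) - (b:ℤ)) * sl) b + P (u + ((a:ℤ) - (b:ℤ)) * sl) b).natDegree
              ≤ n := le_trans (natDegree_add_le _ _) (max_le (hP1 _ b) (hP1 _ b))
          have h2 : (Polynomial.C ((b:ℕ):ℚ) + Polynomial.C (q:ℚ) * Polynomial.X).natDegree
              ≤ 1 := by
            apply le_trans (natDegree_add_le _ _)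
            rw [max_le_iff]
            exact ⟨by simp, le_trans (natDegree_C_mul_le _ _) (by simp)⟩
          calc _ ≤ _ * _ := Nat.mul_le_mul h1 h2
            _ = n := by ring
        have := hQ1 a b
        calc (Q a b).natDegree * (A a b).natDegree ≤ (n+1) * 1 :=
              Nat.mul_le_mul (by omega) hAdeg
          _ = n + 1 := by ring
    · -- evaluation
      intro k
      have hak : k % q < q := Nat.mod_lt k hq
      set a : Fin q := ⟨k % q, hak⟩ with ha
      have hdm : k / q * q + k % q = k := by rw [mul_comm]; exact Nat.div_add_mod k q
      -- step 1: recursion + cast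
      have step1 : (cnt q (n+1) s u k : ℚ)
          = ∑ m ∈ Finset.Icc (-(k:ℤ)) k,
              (cnt q n s' (u - m * sl) (k - m.natAbs) : ℚ) := by
        rw [cnt_succ]
        push_cast
        rfl
      set f : ℤ → ℚ := fun m => (cnt q n s' (u - m * sl) (k - m.natAbs) : ℚ) with hf
      set F : ℕ → ℚ := fun j => (cnt q n s' (u - ((k:ℤ)-j)*sl) j : ℚ)
          + (cnt q n s' (u + ((k:ℤ)-j)*sl) j : ℚ) with hF
      have step2 : ∑ m ∈ Finset.Icc (-(k:ℤ)) k, f m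
          = f 0 + ∑ j ∈ Finset.range k, F j := by
        rw [sum_Icc_neg]
        congr 1
        rw [← Finset.sum_range_reflect F k]
        apply Finset.sum_congr rfl
        intro j hj
        rw [Finset.mem_range] at hj
        have e1 : ((k - 1 - j : ℕ) : ℤ) = (k:ℤ) - 1 - j := by omega
        have e2 : (k:ℤ) - ((k - 1 - j : ℕ) : ℤ) = (j:ℤ) + 1 := by omega
        rw [hF]
        simp only [e2]
        rw [hf]
        simp only []
        have e3 : ((j:ℤ)+1).natAbs = j + 1 := by omega
        have e4 : (-((j:ℤ)+1)).natAbs = j + 1 := by omega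
        have e5 : k - (j+1) = k - 1 - j := by omega
        have e6 : u - (-((j:ℤ)+1)) * sl = u + ((j:ℤ)+1) * sl := by ring
        rw [e3, e4, e5, e6]
      have hf0 : f 0 = (cnt q n s' u k : ℚ) := by
        rw [hf]; simp
      -- step 3: residue split and polynomial identification
      have hkz : ((k/q : ℕ):ℤ) * (q:ℤ) + ((k % q : ℕ):ℤ) = (k:ℤ) := by
        rw [mul_comm]; exact_mod_cast Nat.div_add_mod k q
      set T : ℕ → ℚ := fun b => ((Q a ⟨b % q, Nat.mod_lt b hq⟩).comp
          (A a ⟨b % q, Nat.mod_lt b hq⟩)).eval (k:ℚ) with hT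
      have step3 : ∑ j ∈ Finset.range k, F j = ∑ b ∈ Finset.range q, T b := by
        rw [sum_range_residues q hq F k]
        apply Finset.sum_congr rfl
        intro b hb
        rw [Finset.mem_range] at hb
        have hmk : ∀ (h : b % q < q), (⟨b % q, h⟩ : Fin q) = ⟨b, hb⟩ := fun h =>
          Fin.ext (Nat.mod_eq_of_lt hb)
        have hav : ((a:ℕ):ℤ) = ((k % q : ℕ):ℤ) := rfl
        have hterm : ∀ t : ℕ, F (b + t*q) = (R a ⟨b, hb⟩).eval (t:ℚ) := by
          intro t
          have hmod : (b + t*q) % q = b := by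
            rw [Nat.add_mul_mod_self_right, Nat.mod_eq_of_lt hb]
          have hdvd1 : (q:ℤ) ∣ (u - ((k:ℤ)-((b + t*q : ℕ):ℤ))*sl)
              - (u - (((a:ℕ):ℤ) - ((b:ℕ):ℤ))*sl) := by
            have e : (u - ((k:ℤ)-((b + t*q : ℕ):ℤ))*sl) - (u - (((a:ℕ):ℤ) - ((b:ℕ):ℤ))*sl)
                = (q:ℤ) * (((t:ℤ) - ((k/q:ℕ):ℤ)) * sl) := by
              rw [hav, ← hkz]
              push_cast
              ring
            rw [e]
            exact Dvd.intro _ rfl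
          have hdvd2 : (q:ℤ) ∣ (u + ((k:ℤ)-((b + t*q : ℕ):ℤ))*sl)
              - (u + (((a:ℕ):ℤ) - ((b:ℕ):ℤ))*sl) := by
            have he : (u + ((k:ℤ)-((b + t*q : ℕ):ℤ))*sl) - (u + (((a:ℕ):ℤ) - ((b:ℕ):ℤ))*sl)
              = -((u - ((k:ℤ)-((b + t*q : ℕ):ℤ))*sl) - (u - (((a:ℕ):ℤ) - ((b:ℕ):ℤ))*sl)) := by
              ring
            rw [he]
            exact dvd_neg.mpr hdvd1
          rw [hF]
          simp only []
          rw [cnt_congr q n s' hdvd1 (b + t*q), cnt_congr q n s' hdvd2 (b + t*q)]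
          rw [hP2 (u - (((a:ℕ):ℤ) - ((b:ℕ):ℤ))*sl) (b + t*q),
              hP2 (u + (((a:ℕ):ℤ) - ((b:ℕ):ℤ))*sl) (b + t*q)]
          have hfin : ∀ (h : (b + t*q) % q < q), (⟨(b + t*q) % q, h⟩ : Fin q) = ⟨b, hb⟩ :=
            fun h => Fin.ext hmod
          rw [hfin, hR]
          have hcast : ((b + t*q : ℕ):ℚ) = ((b:ℕ):ℚ) + (q:ℚ) * (t:ℚ) := by push_cast; ring
          simp only [eval_comp, eval_add, eval_mul, eval_C, eval_X]
          rw [hcast]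
        rw [Finset.sum_congr rfl (fun t _ => hterm t), hQ2 a ⟨b, hb⟩]
        rw [hT]
        simp only []
        rw [hmk (Nat.mod_lt b hq)]
        rw [eval_comp]
        congr 1
        rw [residue_count q hq k b hb, hA]
        simp only [eval_add, eval_mul, eval_C, eval_X]
        have hqQ : (q:ℚ) ≠ 0 := by positivity
        have hkq : ((k/q : ℕ):ℚ) * (q:ℚ) + ((k % q : ℕ):ℚ) = (k:ℚ) := by
          rw [mul_comm]; exact_mod_cast Nat.div_add_mod k q
        have hval : ((a:ℕ):ℚ) = ((k % q : ℕ):ℚ) := rfl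
        by_cases hba : b < k % q
        · rw [if_pos hba]
          have : ((a:ℕ) : ℕ) = k % q := rfl
          rw [show ((if b < (a:ℕ) then (1:ℚ) else 0)) = 1 from if_pos (by rw [this]; exact hba)]
          push_cast
          rw [hval]
          field_simp
          linear_combination hkq
        · rw [if_neg hba]
          have : ((a:ℕ) : ℕ) = k % q := rfl
          rw [show ((if b < (a:ℕ) then (1:ℚ) else 0)) = 0 from if_neg (by rw [this]; exact hba)]
          push_cast
          rw [hval]
          field_simp
          linear_combination hkq
      have hfin2 : ∑ b : Fin q, ((Q a b).comp (A a b)).eval (k:ℚ) = ∑ b ∈ Finset.range q, T b := by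
        rw [← Fin.sum_univ_eq_sum_range T q]
        apply Finset.sum_congr rfl
        intro b _
        rw [hT]
        simp only []
        have : (⟨(b:ℕ) % q, Nat.mod_lt (b:ℕ) hq⟩ : Fin q) = b :=
          Fin.ext (Nat.mod_eq_of_lt b.isLt)
        rw [this]
      -- combine
      rw [step1, step2, hf0, step3, hP2 u k, ← hfin2]
      simp only [eval_add, Polynomial.eval_finset_sum]
      rfl


/-- **Quasipolynomiality of the counting function of a congruence lattice.**
Let `L_{q,s} = {a ∈ ℤⁿ : Σᵢ aᵢsᵢ ≡ 0 (mod q)}` with `gcd(q, s₁, …, sₙ) = 1` and let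
`Φ(k)` be the number of points of `L_{q,s}` of one-norm at most `k`.  Then `Φ` is a
quasipolynomial of degree `n` with period dividing `q`: there are rational polynomials
`p₀, …, p_{q-1}`, each of degree at most `n`, with `Φ(k) = p_{k mod q}(k)` for all `k`. -/
theorem counting_function_quasipolynomial
    (n : ℕ) (hn : 1 ≤ n) (q : ℕ) (hq : 0 < q) (s : Fin n → ℤ)
    (hs : Int.gcd (q : ℤ) (Finset.univ.gcd s) = 1)
    (Φ : ℕ → ℕ)
    (hΦ : ∀ k, Φ k = Set.ncard {a : Fin n → ℤ |
        (q : ℤ) ∣ (∑ i, a i * s i) ∧ (∑ i, (a i).natAbs) ≤ k}) :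
    ∃ p : Fin q → Polynomial ℚ, (∀ i, (p i).degree ≤ (n : ℕ)) ∧
      ∀ k : ℕ, (Φ k : ℚ) = (p ⟨k % q, Nat.mod_lt k hq⟩).eval (k : ℚ) := by
  obtain ⟨p, hdeg, heval⟩ := key q hq n s 0
  refine ⟨p, ?_, ?_⟩
  · intro i
    calc (p i).degree ≤ ((p i).natDegree : WithBot ℕ) := Polynomial.degree_le_natDegree
      _ ≤ (n : WithBot ℕ) := by exact_mod_cast hdeg i
  · intro k
    have h2 : Φ k = cnt q n s 0 k := by
      rw [hΦ k]
      unfold cnt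
      congr 1
      ext a
      simp
    rw [h2]
    exact heval k
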